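/- Assume λθ > Nμ and 0 ≤ δ < N/(λθ). Define Δ_cr(δ) = arccos(-(δλ²θ² + N²μ)/(Nλθ(1+δμ))) · sqrt((N² - δ²λ²θ²)/(λ²θ² - N²μ²)). Then Δ_cr is a concave function of δ on [0, N/(λθ)); in particular its second derivative with respect to δ is negative on this interval. -/

import Mathlib

open Real Set

namespace DcrAux

noncomputable def F (c x : ℝ) : ℝ :=
  Real.arccos (-(x + c) / (1 + c * x)) * Real.sqrt (1 - x ^ 2)

noncomputable def F1 (c x : ℝ) : ℝ :=
  Real.sqrt (1 - c ^ 2) / (1 + c * x)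
    - Real.arccos (-(x + c) / (1 + c * x)) * x / Real.sqrt (1 - x ^ 2)

noncomputable def F2 (c x : ℝ) : ℝ :=
  -(Real.sqrt (1 - c ^ 2) * c / (1 + c * x) ^ 2)
    - Real.sqrt (1 - c ^ 2) * x / ((1 + c * x) * (1 - x ^ 2))
    - Real.arccos (-(x + c) / (1 + c * x)) / Real.sqrt (1 - x ^ 2) ^ 3

variable {c x : ℝ}

lemma hu (hc0 : 0 < c) (hc1 : c < 1) (hx1 : -1 < x) (hx2 : x < 1) : 0 < 1 + c * x := by
  nlinarith

lemma hx2pos (hx1 : -1 < x) (hx2 : x < 1) : 0 < 1 - x ^ 2 := by nlinarith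

lemma hg_lt (hc0 : 0 < c) (hc1 : c < 1) (hx1 : -1 < x) (hx2 : x < 1) :
    -(x + c) / (1 + c * x) < 1 := by
  rw [div_lt_one (hu hc0 hc1 hx1 hx2)]; nlinarith

lemma hg_gt (hc0 : 0 < c) (hc1 : c < 1) (hx1 : -1 < x) (hx2 : x < 1) :
    -1 < -(x + c) / (1 + c * x) := by
  rw [lt_div_iff₀ (hu hc0 hc1 hx1 hx2)]; nlinarith

lemma hsg (hc0 : 0 < c) (hc1 : c < 1) (hx1 : -1 < x) (hx2 : x < 1) :
    Real.sqrt (1 - (-(x + c) / (1 + c * x)) ^ 2)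
      = Real.sqrt (1 - x ^ 2) * Real.sqrt (1 - c ^ 2) / (1 + c * x) := by
  have hu' := hu hc0 hc1 hx1 hx2
  have h1 : 1 - (-(x + c) / (1 + c * x)) ^ 2
      = (Real.sqrt (1 - x ^ 2) * Real.sqrt (1 - c ^ 2) / (1 + c * x)) ^ 2 := by
    rw [div_pow, div_pow, mul_pow, Real.sq_sqrt (hx2pos hx1 hx2).le,
      Real.sq_sqrt (by nlinarith : (0:ℝ) ≤ 1 - c ^ 2)]
    rw [one_sub_div (by positivity)]
    ring
  rw [h1, Real.sqrt_sq (by positivity)]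

lemma hasDerivAt_F (hc0 : 0 < c) (hc1 : c < 1) (hx1 : -1 < x) (hx2 : x < 1) :
    HasDerivAt (F c) (F1 c x) x := by
  have hu' := hu hc0 hc1 hx1 hx2
  have hs' := hx2pos hx1 hx2
  have hsp : 0 < Real.sqrt (1 - x ^ 2) := Real.sqrt_pos.mpr hs'
  have htp : 0 < Real.sqrt (1 - c ^ 2) := Real.sqrt_pos.mpr (by nlinarith)
  have hg : HasDerivAt (fun y : ℝ => -(y + c) / (1 + c * y)) ((c ^ 2 - 1) / (1 + c * x) ^ 2) x := by
    have h1 : HasDerivAt (fun y : ℝ => -(y + c)) (-1) x := by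
      exact ((hasDerivAt_id x).add_const c).neg
    have h2 : HasDerivAt (fun y : ℝ => 1 + c * y) c x := by
      simpa using ((hasDerivAt_id x).const_mul c).const_add 1
    have := h1.div h2 hu'.ne'
    refine this.congr_deriv (Eq.symm ?_)
    field_simp
    ring
  have hA : HasDerivAt (fun y : ℝ => Real.arccos (-(y + c) / (1 + c * y)))
      (Real.sqrt (1 - c ^ 2) / ((1 + c * x) * Real.sqrt (1 - x ^ 2))) x := by
    have := (Real.hasDerivAt_arccos (hg_gt hc0 hc1 hx1 hx2).ne'
      (hg_lt hc0 hc1 hx1 hx2).ne).comp x hg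
    refine this.congr_deriv (Eq.symm ?_)
    rw [hsg hc0 hc1 hx1 hx2]
    have ht2 : Real.sqrt (1 - c ^ 2) ^ 2 = 1 - c ^ 2 :=
      Real.sq_sqrt (by nlinarith : (0:ℝ) ≤ 1 - c ^ 2)
    field_simp
    linear_combination ht2
  have hS : HasDerivAt (fun y : ℝ => Real.sqrt (1 - y ^ 2)) (-x / Real.sqrt (1 - x ^ 2)) x := by
    have h1 : HasDerivAt (fun y : ℝ => 1 - y ^ 2) (-(2 * x)) x := by
      simpa using ((hasDerivAt_pow 2 x).const_sub 1)
    have := (Real.hasDerivAt_sqrt hs'.ne').comp x h1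
    refine this.congr_deriv (Eq.symm ?_)
    field_simp
  have hmul := hA.mul hS
  have : F1 c x = Real.sqrt (1 - c ^ 2) / ((1 + c * x) * Real.sqrt (1 - x ^ 2))
      * Real.sqrt (1 - x ^ 2)
      + Real.arccos (-(x + c) / (1 + c * x)) * (-x / Real.sqrt (1 - x ^ 2)) := by
    unfold F1
    field_simp
    ring
  rw [this]
  exact hmul

lemma hasDerivAt_F1 (hc0 : 0 < c) (hc1 : c < 1) (hx1 : -1 < x) (hx2 : x < 1) :
    HasDerivAt (F1 c) (F2 c x) x := by
  have hu' := hu hc0 hc1 hx1 hx2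
  have hs' := hx2pos hx1 hx2
  have hsp : 0 < Real.sqrt (1 - x ^ 2) := Real.sqrt_pos.mpr hs'
  have htp : 0 < Real.sqrt (1 - c ^ 2) := Real.sqrt_pos.mpr (by nlinarith)
  have hg : HasDerivAt (fun y : ℝ => -(y + c) / (1 + c * y)) ((c ^ 2 - 1) / (1 + c * x) ^ 2) x := by
    have h1 : HasDerivAt (fun y : ℝ => -(y + c)) (-1) x := by
      exact ((hasDerivAt_id x).add_const c).neg
    have h2 : HasDerivAt (fun y : ℝ => 1 + c * y) c x := by
      simpa using ((hasDerivAt_id x).const_mul c).const_add 1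
    have := h1.div h2 hu'.ne'
    refine this.congr_deriv (Eq.symm ?_)
    field_simp
    ring
  have hA : HasDerivAt (fun y : ℝ => Real.arccos (-(y + c) / (1 + c * y)))
      (Real.sqrt (1 - c ^ 2) / ((1 + c * x) * Real.sqrt (1 - x ^ 2))) x := by
    have := (Real.hasDerivAt_arccos (hg_gt hc0 hc1 hx1 hx2).ne'
      (hg_lt hc0 hc1 hx1 hx2).ne).comp x hg
    refine this.congr_deriv (Eq.symm ?_)
    rw [hsg hc0 hc1 hx1 hx2]
    have ht2 : Real.sqrt (1 - c ^ 2) ^ 2 = 1 - c ^ 2 :=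
      Real.sq_sqrt (by nlinarith : (0:ℝ) ≤ 1 - c ^ 2)
    field_simp
    linear_combination ht2
  have hS : HasDerivAt (fun y : ℝ => Real.sqrt (1 - y ^ 2)) (-x / Real.sqrt (1 - x ^ 2)) x := by
    have h1 : HasDerivAt (fun y : ℝ => 1 - y ^ 2) (-(2 * x)) x := by
      simpa using ((hasDerivAt_pow 2 x).const_sub 1)
    have := (Real.hasDerivAt_sqrt hs'.ne').comp x h1
    refine this.congr_deriv (Eq.symm ?_)
    field_simp
  have h2 : HasDerivAt (fun y : ℝ => 1 + c * y) c x := by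
    simpa using ((hasDerivAt_id x).const_mul c).const_add 1
  have hP1 : HasDerivAt (fun y : ℝ => Real.sqrt (1 - c ^ 2) / (1 + c * y))
      (-(Real.sqrt (1 - c ^ 2) * c / (1 + c * x) ^ 2)) x := by
    have := (hasDerivAt_const x (Real.sqrt (1 - c ^ 2))).div h2 hu'.ne'
    refine this.congr_deriv (Eq.symm ?_)
    field_simp
    ring
  have hNum : HasDerivAt (fun y : ℝ => Real.arccos (-(y + c) / (1 + c * y)) * y)
      (Real.sqrt (1 - c ^ 2) / ((1 + c * x) * Real.sqrt (1 - x ^ 2)) * x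
        + Real.arccos (-(x + c) / (1 + c * x))) x := by
    exact (hA.mul (hasDerivAt_id' x)).congr_deriv (by ring)
  have hP2 := hNum.div hS hsp.ne'
  have hsub := hP1.sub hP2
  have hval : F2 c x = -(Real.sqrt (1 - c ^ 2) * c / (1 + c * x) ^ 2)
      - ((Real.sqrt (1 - c ^ 2) / ((1 + c * x) * Real.sqrt (1 - x ^ 2)) * x
          + Real.arccos (-(x + c) / (1 + c * x))) * Real.sqrt (1 - x ^ 2)
        - Real.arccos (-(x + c) / (1 + c * x)) * x * (-x / Real.sqrt (1 - x ^ 2)))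
        / Real.sqrt (1 - x ^ 2) ^ 2 := by
    unfold F2
    have hs2 : Real.sqrt (1 - x ^ 2) ^ 2 = 1 - x ^ 2 := Real.sq_sqrt hs'.le
    set s := Real.sqrt (1 - x ^ 2) with hsdef
    set A := Real.arccos (-(x + c) / (1 + c * x)) with hAdef
    set t := Real.sqrt (1 - c ^ 2) with htdef
    set u := 1 + c * x with hudef
    rw [← hs2]
    have hune : u ≠ 0 := hu'.ne'
    have hsne : s ≠ 0 := hsp.ne'
    clear_value s A t u
    field_simp
    linear_combination (A * u ^ 2) * hs2
  rw [hval]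
  exact hsub

lemma F2_neg (hc0 : 0 < c) (hc1 : c < 1) (hx1 : 0 ≤ x) (hx2 : x < 1) :
    F2 c x < 0 := by
  have hx1' : (-1:ℝ) < x := by linarith
  have hu' := hu hc0 hc1 hx1' hx2
  have hs' := hx2pos hx1' hx2
  have hsp : 0 < Real.sqrt (1 - x ^ 2) := Real.sqrt_pos.mpr hs'
  have htp : 0 < Real.sqrt (1 - c ^ 2) := Real.sqrt_pos.mpr (by nlinarith)
  have hApos : 0 < Real.arccos (-(x + c) / (1 + c * x)) :=
    Real.arccos_pos.mpr (hg_lt hc0 hc1 hx1' hx2)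
  have h1 : 0 < Real.sqrt (1 - c ^ 2) * c / (1 + c * x) ^ 2 := by positivity
  have h2 : 0 ≤ Real.sqrt (1 - c ^ 2) * x / ((1 + c * x) * (1 - x ^ 2)) := by positivity
  have h3 : 0 < Real.arccos (-(x + c) / (1 + c * x)) / Real.sqrt (1 - x ^ 2) ^ 3 := by positivity
  unfold F2
  linarith

lemma sqrt_div_pos (p : ℝ) {q : ℝ} (hq : 0 < q) :
    Real.sqrt (p / q) = Real.sqrt p / Real.sqrt q := by
  rcases le_or_gt 0 p with h | h
  · exact Real.sqrt_div h q
  · rw [Real.sqrt_eq_zero_of_nonpos (div_nonpos_of_nonpos_of_nonneg h.le hq.le),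
      Real.sqrt_eq_zero_of_nonpos h.le, zero_div]

end DcrAux

noncomputable def Dcr (lam mu th : ℝ) (N : ℕ) (d : ℝ) : ℝ :=
  Real.arccos (-(d * lam^2 * th^2 + (N : ℝ)^2 * mu) / ((N : ℝ) * lam * th * (1 + d * mu))) *
    Real.sqrt (((N : ℝ)^2 - d^2 * lam^2 * th^2) / (lam^2 * th^2 - (N : ℝ)^2 * mu^2))

theorem Dcr_concave
    (lam mu th : ℝ) (N : ℕ) (hN : 0 < N)
    (hlam : 0 < lam) (hmu : 0 < mu) (hth : 0 < th)
    (hgt : lam * th > N * mu) :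
    ConcaveOn ℝ (Set.Ico (0 : ℝ) ((N : ℝ) / (lam * th))) (Dcr lam mu th N)
    ∧ ∀ d ∈ Set.Ico (0 : ℝ) ((N : ℝ) / (lam * th)),
        deriv (deriv (Dcr lam mu th N)) d < 0 := by
  have hNpos : (0:ℝ) < (N:ℝ) := by exact_mod_cast hN
  set a := lam * th with hadef
  have ha : 0 < a := by rw [hadef]; positivity
  set c := (N:ℝ) * mu / a with hcdef
  have hc0 : 0 < c := by rw [hcdef]; positivity
  have hc1 : c < 1 := by rw [hcdef, div_lt_one ha]; exact hgt
  set m := a / (N:ℝ) with hmdef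
  have hm : 0 < m := by rw [hmdef]; positivity
  have hQ : 0 < a ^ 2 - ((N:ℝ) * mu) ^ 2 := by
    have h1 : 0 < a - (N:ℝ) * mu := sub_pos.mpr hgt
    have h2 : 0 < a + (N:ℝ) * mu := by positivity
    nlinarith
  set K := (N:ℝ) / Real.sqrt (a ^ 2 - ((N:ℝ) * mu) ^ 2) with hKdef
  have hK : 0 < K := div_pos hNpos (Real.sqrt_pos.mpr hQ)
  have hfun : Dcr lam mu th N = fun d => K * DcrAux.F c (m * d) := by
    funext d
    unfold Dcr DcrAux.F
    have hA : -(d * lam ^ 2 * th ^ 2 + (N:ℝ) ^ 2 * mu) / ((N:ℝ) * lam * th * (1 + d * mu))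
        = -(m * d + c) / (1 + c * (m * d)) := by
      have hcm : (1:ℝ) + c * (m * d) = 1 + d * mu := by
        rw [hcdef, hmdef]
        field_simp
      rw [hcm]
      have hnum : m * d + c = (d * lam ^ 2 * th ^ 2 + (N:ℝ) ^ 2 * mu) / ((N:ℝ) * lam * th) := by
        rw [hmdef, hcdef, hadef]
        field_simp
      rw [hnum]
      rcases eq_or_ne (1 + d * mu) 0 with h0 | h0
      · rw [h0, mul_zero, div_zero, neg_div, div_zero, neg_zero]
      · field_simp
    have hSq : Real.sqrt (((N:ℝ)^2 - d^2*lam^2*th^2)/(lam^2*th^2 - (N:ℝ)^2*mu^2))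
        = (N:ℝ) * Real.sqrt (1 - (m*d)^2) / Real.sqrt (a^2 - ((N:ℝ)*mu)^2) := by
      have h1 : lam^2*th^2 - (N:ℝ)^2*mu^2 = a^2 - ((N:ℝ)*mu)^2 := by rw [hadef]; ring
      have h2 : (N:ℝ)^2 - d^2*lam^2*th^2 = (N:ℝ)^2 * (1 - (m*d)^2) := by
        rw [hmdef, hadef]
        field_simp
      rw [h1, h2, DcrAux.sqrt_div_pos _ hQ, Real.sqrt_mul (by positivity), Real.sqrt_sq hNpos.le]
    rw [hA, hSq, hKdef]
    ring
  have key : ∀ d : ℝ, d ∈ Ioo (-((N:ℝ)/a)) ((N:ℝ)/a) → -1 < m * d ∧ m * d < 1 := by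
    intro d hd
    have h3 : (N:ℝ)/a * a = N := div_mul_cancel₀ _ ha.ne'
    constructor
    · rw [hmdef, div_mul_eq_mul_div, lt_div_iff₀ hNpos]
      nlinarith [hd.1]
    · rw [hmdef, div_mul_eq_mul_div, div_lt_one hNpos]
      nlinarith [hd.2]
  have hD1 : ∀ d ∈ Ioo (-((N:ℝ)/a)) ((N:ℝ)/a),
      HasDerivAt (Dcr lam mu th N) (K * (DcrAux.F1 c (m*d) * m)) d := by
    intro d hd
    obtain ⟨h1, h2⟩ := key d hd
    have hmd : HasDerivAt (fun y : ℝ => m * y) m d := by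
      simpa using (hasDerivAt_id d).const_mul m
    have h := ((DcrAux.hasDerivAt_F hc0 hc1 h1 h2).comp d hmd).const_mul K
    rw [hfun]
    exact h
  have hD2 : ∀ d ∈ Ioo (-((N:ℝ)/a)) ((N:ℝ)/a),
      deriv (deriv (Dcr lam mu th N)) d = K * (DcrAux.F2 c (m*d) * m * m) := by
    intro d hd
    obtain ⟨h1, h2⟩ := key d hd
    have hev : deriv (Dcr lam mu th N) =ᶠ[nhds d] (fun y => K * (DcrAux.F1 c (m*y) * m)) := by
      filter_upwards [isOpen_Ioo.mem_nhds hd] with y hy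
      exact (hD1 y hy).deriv
    rw [hev.deriv_eq]
    have hmd : HasDerivAt (fun y : ℝ => m * y) m d := by
      simpa using (hasDerivAt_id d).const_mul m
    have h := (((DcrAux.hasDerivAt_F1 hc0 hc1 h1 h2).comp d hmd).mul_const m).const_mul K
    exact h.deriv
  have hsub : ∀ d ∈ Ico (0:ℝ) ((N:ℝ)/a), d ∈ Ioo (-((N:ℝ)/a)) ((N:ℝ)/a) := by
    intro d hd
    have hb : (0:ℝ) < (N:ℝ)/a := by positivity
    exact ⟨by linarith [hd.1], hd.2⟩
  have part2 : ∀ d ∈ Ico (0:ℝ) ((N:ℝ)/a), deriv (deriv (Dcr lam mu th N)) d < 0 := by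
    intro d hd
    rw [hD2 d (hsub d hd)]
    have hx0 : 0 ≤ m * d := mul_nonneg hm.le hd.1
    have hx1 : m * d < 1 := (key d (hsub d hd)).2
    have hF2 := DcrAux.F2_neg hc0 hc1 hx0 hx1
    exact mul_neg_of_pos_of_neg hK
      (mul_neg_of_neg_of_pos (mul_neg_of_neg_of_pos hF2 hm) hm)
  refine ⟨(strictConcaveOn_of_deriv2_neg (convex_Ico _ _) ?_ ?_).concaveOn, part2⟩
  · intro d hd
    exact (hD1 d (hsub d hd)).continuousAt.continuousWithinAt
  · intro x hx
    rw [interior_Ico] at hx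
    show deriv (deriv (Dcr lam mu th N)) x < 0
    exact part2 x (Ioo_subset_Ico_self hx)
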